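/- arXiv:cs/0607024 — 2 statements merged into one kernel-verified Lean document; each statement's English description precedes it below -/
import Mathlib

section
/- Let C be a binary linear [n,k,d] code. The matrix H whose rows are all nonzero codewords of the dual code C^⊥ of weight at most k+1 has rank n-k, hence is a parity-check matrix for C. -/
open Finset

variable {ι : Type*}

/-- Support of a binary word. -/
def supp [Fintype ι] (x : ι → ZMod 2) : Finset ι :=
  Finset.univ.filter (fun j => x j ≠ 0)

/-- Hamming weight of a binary word. -/
def wt [Fintype ι] (x : ι → ZMod 2) : ℕ := (supp x).card

/-- `S` is a stopping set for the matrix `H` if no row of the column-submatrix `H_S`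
has weight exactly one. -/
def IsStoppingSet {ρ : Type*} (H : Matrix ρ ι (ZMod 2)) (S : Finset ι) : Prop :=
  ∀ i : ρ, (S.filter (fun j => H i j = 1)).card ≠ 1

/-- The dual code of a binary linear code. -/
def dualCode [Fintype ι] (C : Submodule (ZMod 2) (ι → ZMod 2)) :
    Submodule (ZMod 2) (ι → ZMod 2) where
  carrier := {y | ∀ x ∈ C, ∑ j, y j * x j = 0}
  add_mem' := by
    intro a b ha hb x hx
    simp only [Set.mem_setOf_eq] at *
    simp [Pi.add_apply, add_mul, Finset.sum_add_distrib, ha x hx, hb x hx]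
  zero_mem' := by intro x hx; simp
  smul_mem' := by
    intro c a ha x hx
    simp only [Set.mem_setOf_eq] at *
    simp [Pi.smul_apply, smul_eq_mul, mul_assoc, ← Finset.mul_sum, ha x hx]

/-- The complete parity-check matrix of `C`: rows indexed by all dual codewords. -/
def Hstar [Fintype ι] (C : Submodule (ZMod 2) (ι → ZMod 2)) :
    Matrix (dualCode C) ι (ZMod 2) := fun y j => (y : ι → ZMod 2) j

/-- A code is minimum stopping if every stopping set of its complete parity-check
matrix is the support of a codeword. -/
def MinStopping [Fintype ι] (C : Submodule (ZMod 2) (ι → ZMod 2)) : Prop :=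
  ∀ S : Finset ι, IsStoppingSet (Hstar C) S → ∃ c ∈ C, supp c = S

/-- `H` is a parity-check matrix for `C` : the words checked by all rows of `H`
are exactly the codewords of `C`. -/
def IsPCM {ρ : Type*} [Fintype ι] (C : Submodule (ZMod 2) (ι → ZMod 2))
    (H : Matrix ρ ι (ZMod 2)) : Prop :=
  ∀ x : ι → ZMod 2, x ∈ C ↔ ∀ i : ρ, ∑ j, H i j * x j = 0

section Aux
variable [Fintype ι] [DecidableEq ι] (C : Submodule (ZMod 2) (ι → ZMod 2))

lemma mem_dualCode {y : ι → ZMod 2} :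
    y ∈ dualCode C ↔ ∀ x ∈ C, ∑ j, y j * x j = 0 := Iff.rfl

/-- the map sending `y` to the functional `c ↦ ∑ y j * c j` on `C`. -/
noncomputable def phi : (ι → ZMod 2) →ₗ[ZMod 2] Module.Dual (ZMod 2) C where
  toFun y :=
    { toFun := fun c => ∑ j, y j * (c : ι → ZMod 2) j
      map_add' := by intro a b; simp [mul_add, Finset.sum_add_distrib]
      map_smul' := by intro r a; simp [Finset.mul_sum, mul_left_comm] }
  map_add' := by intro a b; ext c; simp [add_mul, Finset.sum_add_distrib]
  map_smul' := by intro r a; ext c; simp [Finset.mul_sum, mul_assoc]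

@[simp] lemma phi_apply (y : ι → ZMod 2) (c : C) :
    phi C y c = ∑ j, y j * (c : ι → ZMod 2) j := rfl

lemma ker_phi : LinearMap.ker (phi C) = dualCode C := by
  ext y
  simp only [LinearMap.mem_ker, mem_dualCode]
  constructor
  · intro h x hx
    have := congrArg (fun g : Module.Dual (ZMod 2) C => g ⟨x, hx⟩) h
    simpa using this
  · intro h
    ext c
    simpa using h c.1 c.2

lemma phi_surjective : Function.Surjective (phi C) := by
  intro g
  obtain ⟨g', hg'⟩ := LinearMap.exists_extend g
  refine ⟨fun j => g' (Pi.single j 1), ?_⟩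
  ext c
  have h1 := LinearMap.pi_apply_eq_sum_univ g' (c : ι → ZMod 2)
  have h2 : g' (c : ι → ZMod 2) = g c := by
    have := congrArg (fun f : C →ₗ[ZMod 2] ZMod 2 => f c) hg'
    simpa using this
  simp only [phi_apply]
  rw [← h2, h1]
  refine Finset.sum_congr rfl fun j _ => ?_
  have : (Pi.single j 1 : ι → ZMod 2) = fun i => if j = i then 1 else 0 := by
    ext i; simp [Pi.single_apply, eq_comm]
  rw [this, smul_eq_mul, mul_comm]

lemma finrank_dualCode_add :
    Module.finrank (ZMod 2) (dualCode C) + Module.finrank (ZMod 2) C = Fintype.card ι := by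
  have h := LinearMap.finrank_range_add_finrank_ker (phi C)
  rw [ker_phi, LinearMap.range_eq_top.2 (phi_surjective C), finrank_top] at h
  rw [Subspace.dual_finrank_eq] at h
  rw [Module.finrank_pi (ZMod 2)] at h
  omega

end Aux
lemma add_self_zmod2 {M : Type*} [AddCommMonoid M] [Module (ZMod 2) M] (x : M) : x + x = 0 := by
  rw [← two_smul (ZMod 2) x]
  have h2 : (2 : ZMod 2) = 0 := rfl
  rw [h2, zero_smul]

lemma span_low_wt [Fintype ι] [DecidableEq ι] (C : Submodule (ZMod 2) (ι → ZMod 2)) :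
    dualCode C ≤ Submodule.span (ZMod 2)
      {y | y ∈ dualCode C ∧ y ≠ 0 ∧ wt y ≤ Module.finrank (ZMod 2) C + 1} := by
  classical
  set k := Module.finrank (ZMod 2) C with hk
  set f : ι → Module.Dual (ZMod 2) C := fun j => phi C (Pi.single j 1) with hf
  have hsingle : ∀ (j : ι) (r : ZMod 2), r • (Pi.single j 1 : ι → ZMod 2) = Pi.single j r := by
    intro j r; ext i; simp [Pi.single_apply, mul_comm]
  have hspanf : Submodule.span (ZMod 2) (Set.range f) = ⊤ := by
    rw [eq_top_iff]
    intro g _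
    obtain ⟨y, rfl⟩ := phi_surjective C g
    have hdec : phi C y = ∑ j, y j • f j := by
      conv_lhs => rw [← Finset.univ_sum_single y]
      rw [map_sum]
      refine Finset.sum_congr rfl fun j _ => ?_
      rw [hf, ← map_smul, hsingle]
    rw [hdec]
    exact Submodule.sum_mem _ fun j _ =>
      Submodule.smul_mem _ _ (Submodule.subset_span ⟨j, rfl⟩)
  obtain ⟨b, hbsub, hbspan, hbind⟩ := exists_linearIndependent (ZMod 2) (Set.range f)
  rw [hspanf] at hbspan
  haveI : Fintype b := ((Set.finite_range f).subset hbsub).fintype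
  have hσ : ∀ v : b, ∃ j, f j = (v : Module.Dual (ZMod 2) C) := fun v => hbsub v.2
  choose σ hσeq using hσ
  have hσeq' : ∀ v : b, phi C (Pi.single (σ v) 1) = (v : Module.Dual (ZMod 2) C) :=
    fun v => hσeq v
  let B : Module.Basis b (ZMod 2) (Module.Dual (ZMod 2) C) :=
    Module.Basis.mk hbind (by rw [Subtype.range_coe]; exact hbspan.ge)
  have hB : ∀ v : b, B v = (v : Module.Dual (ZMod 2) C) := by
    intro v
    show Module.Basis.mk hbind _ v = _
    rw [Module.Basis.mk_apply]
  have hcard : Fintype.card b ≤ k := by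
    have := hbind.fintype_card_le_finrank
    rwa [Subspace.dual_finrank_eq] at this
  set a : ι → b → ZMod 2 := fun j v => B.repr (f j) v with ha
  have hfj : ∀ j, f j = ∑ v : b, a j v • (v : Module.Dual (ZMod 2) C) := by
    intro j
    conv_lhs => rw [← B.sum_repr (f j)]
    exact Finset.sum_congr rfl fun v _ => by rw [hB]
  set Y : ι → (ι → ZMod 2) :=
    fun j => Pi.single j 1 + ∑ v : b, a j v • (Pi.single (σ v) 1 : ι → ZMod 2) with hY
  have hYapp : ∀ j, Y j
      = (Pi.single j 1 : ι → ZMod 2)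
        + ∑ v : b, a j v • (Pi.single (σ v) 1 : ι → ZMod 2) := fun j => rfl
  have hphiY : ∀ j, phi C (Y j) = f j + ∑ v : b, a j v • (v : Module.Dual (ZMod 2) C) := by
    intro j
    rw [hYapp j, map_add, map_sum]
    simp only [map_smul, hσeq']
    rfl
  have hYdual : ∀ j, Y j ∈ dualCode C := by
    intro j
    rw [← ker_phi, LinearMap.mem_ker, hphiY, ← hfj j, add_self_zmod2]
  intro y hy
  set c : b → ZMod 2 := fun v => ∑ j, y j * a j v with hc
  set w : ι → ZMod 2 := ∑ v : b, c v • (Pi.single (σ v) 1 : ι → ZMod 2) with hw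
  have expand : ∀ j, y j • Y j
      = (Pi.single j (y j) : ι → ZMod 2)
        + ∑ v : b, (y j * a j v) • (Pi.single (σ v) 1 : ι → ZMod 2) := by
    intro j
    rw [hYapp j, smul_add, hsingle, Finset.smul_sum]
    congr 1
    exact Finset.sum_congr rfl fun v _ => by rw [smul_smul]
  have hsum : ∑ j, y j • Y j = y + w := by
    rw [Finset.sum_congr rfl fun j _ => expand j, Finset.sum_add_distrib]
    congr 1
    · exact Finset.univ_sum_single y
    · rw [Finset.sum_comm, hw]
      exact Finset.sum_congr rfl fun v _ => by rw [hc, Finset.sum_smul]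
  have hwdual : w ∈ dualCode C := by
    have h1 : ∑ j, y j • Y j ∈ dualCode C :=
      Submodule.sum_mem _ fun j _ => Submodule.smul_mem _ _ (hYdual j)
    rw [hsum] at h1
    have h2 := Submodule.add_mem _ h1 hy
    rwa [add_comm y w, add_assoc, add_self_zmod2, add_zero] at h2
  have hc0 : ∀ v, c v = 0 := by
    have hker : phi C w = 0 := by
      rw [← LinearMap.mem_ker, ker_phi]; exact hwdual
    have hsum2 : ∑ v : b, c v • (v : Module.Dual (ZMod 2) C) = 0 := by
      rw [← hker, hw]
      simp only [map_sum, map_smul, hσeq']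
    exact Fintype.linearIndependent_iff.mp hbind c hsum2
  have hw0 : w = 0 := by
    rw [hw]
    refine Finset.sum_eq_zero fun v _ => ?_
    rw [hc0 v, zero_smul]
  have key : y = ∑ j, y j • Y j := by rw [hsum, hw0, add_zero]
  rw [key]
  refine Submodule.sum_mem _ fun j _ => Submodule.smul_mem _ _ ?_
  rw [← Submodule.span_insert_zero]
  by_cases h0 : Y j = 0
  · exact Submodule.subset_span (by simp [h0])
  · refine Submodule.subset_span (Set.mem_insert_of_mem _ ⟨hYdual j, h0, ?_⟩)
    have hsub : supp (Y j) ⊆ insert j (Finset.univ.image σ) := by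
      intro i hi
      simp only [supp, Finset.mem_filter] at hi
      by_contra hmem
      simp only [Finset.mem_insert, Finset.mem_image, Finset.mem_univ, true_and,
        not_or, not_exists] at hmem
      apply hi.2
      rw [hYapp j]
      simp only [Pi.add_apply, Finset.sum_apply, Pi.smul_apply, smul_eq_mul]
      rw [Pi.single_eq_of_ne (Ne.symm (fun h => hmem.1 h.symm)) 1, zero_add]
      refine Finset.sum_eq_zero fun v _ => ?_
      rw [Pi.single_eq_of_ne (fun h => hmem.2 v h.symm) 1, mul_zero]
    calc wt (Y j) ≤ (insert j (Finset.univ.image σ)).card := Finset.card_le_card hsub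
      _ ≤ (Finset.univ.image σ).card + 1 := Finset.card_insert_le _ _
      _ ≤ Fintype.card b + 1 := by
          have := Finset.card_image_le (s := (Finset.univ : Finset b)) (f := σ)
          rw [Finset.card_univ] at this
          omega
      _ ≤ k + 1 := by omega

lemma dualCode_dualCode [Fintype ι] [DecidableEq ι] (C : Submodule (ZMod 2) (ι → ZMod 2)) :
    dualCode (dualCode C) = C := by
  have h1 := finrank_dualCode_add C
  have h2 := finrank_dualCode_add (dualCode C)
  have hle : C ≤ dualCode (dualCode C) := by
    intro x hx y hy
    rw [← hy x hx]
    exact Finset.sum_congr rfl fun j _ => mul_comm _ _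
  exact (Submodule.eq_of_le_of_finrank_le hle (by omega)).symm


/-- The matrix whose rows are all nonzero dual codewords of weight at most k+1 has rank
n-k, hence is a parity-check matrix for C. -/
theorem stmt_10 {n k : ℕ} (C : Submodule (ZMod 2) (Fin n → ZMod 2))
    (hk : Module.finrank (ZMod 2) C = k)
    (H : Matrix {y : Fin n → ZMod 2 // y ∈ dualCode C ∧ y ≠ 0 ∧ wt y ≤ k + 1}
        (Fin n) (ZMod 2))
    (hrows : ∀ y, H y = y.1) :
    H.rank = n - k ∧ IsPCM C H := by
  classical
  haveI : Fintype {y : Fin n → ZMod 2 // y ∈ dualCode C ∧ y ≠ 0 ∧ wt y ≤ k + 1} :=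
    Fintype.ofFinite _
  subst hk
  have hspan : Submodule.span (ZMod 2)
      {y : Fin n → ZMod 2 | y ∈ dualCode C ∧ y ≠ 0 ∧
        wt y ≤ Module.finrank (ZMod 2) C + 1} = dualCode C := by
    apply le_antisymm
    · rw [Submodule.span_le]; intro y hy; exact hy.1
    · exact span_low_wt C
  have hrangeH : Set.range H = {y : Fin n → ZMod 2 | y ∈ dualCode C ∧ y ≠ 0 ∧
      wt y ≤ Module.finrank (ZMod 2) C + 1} := by
    ext z
    constructor
    · rintro ⟨i, rfl⟩; rw [hrows]; exact i.2
    · intro hz; exact ⟨⟨z, hz⟩, hrows _⟩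
  have hrange : LinearMap.range (Matrix.mulVecLin H.transpose) = dualCode C := by
    rw [Matrix.range_mulVecLin, Matrix.col, Matrix.transpose_transpose, hrangeH, hspan]
  have hdim : Module.finrank (ZMod 2) (dualCode C)
      = n - Module.finrank (ZMod 2) C := by
    have := finrank_dualCode_add C
    rw [Fintype.card_fin] at this
    omega
  constructor
  · rw [← Matrix.rank_transpose, Matrix.rank, hrange, hdim]
  · intro x
    constructor
    · intro hx i
      have h := i.2.1 x hx
      rw [← h]
      exact Finset.sum_congr rfl fun j _ => by rw [hrows i]
    · intro hx
      rw [← dualCode_dualCode C]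
      intro y hy
      rw [← hspan] at hy
      let g : (Fin n → ZMod 2) →ₗ[ZMod 2] ZMod 2 :=
        { toFun := fun z => ∑ j, x j * z j
          map_add' := by intro a b; simp [mul_add, Finset.sum_add_distrib]
          map_smul' := by intro r a; simp [Finset.mul_sum, mul_left_comm] }
      have hLK : {y : Fin n → ZMod 2 | y ∈ dualCode C ∧ y ≠ 0 ∧
          wt y ≤ Module.finrank (ZMod 2) C + 1} ⊆ ↑(LinearMap.ker g) := by
        intro z hz
        simp only [SetLike.mem_coe, LinearMap.mem_ker]
        show ∑ j, x j * z j = 0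
        have h := hx ⟨z, hz⟩
        rw [← h]
        refine Finset.sum_congr rfl fun j _ => ?_
        rw [hrows ⟨z, hz⟩, mul_comm]
      have := Submodule.span_le.mpr hLK hy
      simpa [g] using this
end

section
/- For any binary linear [n,k,d] code C with complete parity-check matrix H*, the number S*_i of stopping sets of size i for H* equals the number A_i of codewords of weight i, for all 0 ≤ i ≤ min(⌈3d/2⌉ - 1, n). -/
open Finset

variable {ι : Type*}

lemma zmod2_cases : ∀ a : ZMod 2, a = 0 ∨ a = 1 := by decide

lemma zmod2_ne {a : ZMod 2} (h : a ≠ 0) : a = 1 := by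
  rcases zmod2_cases a with h0 | h1
  · exact absurd h0 h
  · exact h1

lemma supp_inj {n : ℕ} {x y : Fin n → ZMod 2} (h : supp x = supp y) : x = y := by
  funext k
  by_cases hk : k ∈ supp x
  · have hk' : k ∈ supp y := h ▸ hk
    simp only [supp, Finset.mem_filter, Finset.mem_univ, true_and] at hk hk'
    rw [zmod2_ne hk, zmod2_ne hk']
  · have hk' : k ∉ supp y := h ▸ hk
    simp only [supp, Finset.mem_filter, Finset.mem_univ, true_and, not_not] at hk hk'
    rw [hk, hk']

lemma lin_sum {n : ℕ} (g : (Fin n → ZMod 2) →ₗ[ZMod 2] ZMod 2) (x : Fin n → ZMod 2) :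
    g x = ∑ k, x k * g (Pi.single k 1) := by
  have hx : x = ∑ k, x k • Pi.single k (1 : ZMod 2) := by
    conv_lhs => rw [pi_eq_sum_univ x]
    refine Finset.sum_congr rfl fun k _ => ?_
    congr 1
    funext m
    simp [Pi.single_apply, eq_comm]
  conv_lhs => rw [hx]
  rw [map_sum]
  exact Finset.sum_congr rfl fun k _ => by rw [map_smul, smul_eq_mul]

/-- If `S` is a stopping set for the complete parity-check matrix and `j ∈ S`,
then there is a codeword supported inside `S` which is nonzero at `j`. -/
lemma stopping_mem_support {n : ℕ} (C : Submodule (ZMod 2) (Fin n → ZMod 2))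
    {S : Finset (Fin n)} (hS : IsStoppingSet (Hstar C) S) {j : Fin n} (hj : j ∈ S) :
    ∃ c ∈ C, supp c ⊆ S ∧ c j = 1 := by
  by_contra hcon
  push_neg at hcon
  have h0 : ∀ c ∈ C, (∀ k, k ∉ S → c k = 0) → c j = 0 := by
    intro c hc hk
    have hsub : supp c ⊆ S := by
      intro k hk'
      simp only [supp, Finset.mem_filter, Finset.mem_univ, true_and] at hk'
      by_contra hks
      exact hk' (hk k hks)
    rcases zmod2_cases (c j) with h | h
    · exact h
    · exact absurd h (hcon c hc hsub)
  classical
  let p : (Fin n → ZMod 2) →ₗ[ZMod 2] (Fin n → ZMod 2) :=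
    LinearMap.pi (fun k => if k ∈ S then 0 else LinearMap.proj k)
  have hp : ∀ x k, p x k = if k ∈ S then 0 else x k := by
    intro x k
    simp only [p, LinearMap.pi_apply]
    split_ifs <;> simp [LinearMap.proj_apply]
  let π' : C →ₗ[ZMod 2] (Fin n → ZMod 2) := p ∘ₗ C.subtype
  let e' : C →ₗ[ZMod 2] ZMod 2 := (LinearMap.proj j) ∘ₗ C.subtype
  have hle : LinearMap.ker π' ≤ LinearMap.ker e' := by
    intro c hc
    rw [LinearMap.mem_ker] at hc ⊢
    have hz : ∀ k, k ∉ S → (c : Fin n → ZMod 2) k = 0 := by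
      intro k hkS
      have := congrFun hc k
      rw [show π' c k = p (c : Fin n → ZMod 2) k from rfl, hp] at this
      simpa [hkS] using this
    exact h0 (c : Fin n → ZMod 2) c.2 hz
  obtain ⟨g, hg⟩ := LinearMap.exists_extend
    ((Submodule.liftQ (LinearMap.ker π') e' hle) ∘ₗ
      (LinearMap.quotKerEquivRange π').symm.toLinearMap)
  have hgc : ∀ c : C, g (π' c) = (c : Fin n → ZMod 2) j := by
    intro c
    have hmem : π' c ∈ LinearMap.range π' := LinearMap.mem_range_self π' c
    have h1 : (⟨π' c, hmem⟩ : LinearMap.range π')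
        = (LinearMap.quotKerEquivRange π') (Submodule.Quotient.mk c) := by
      ext
      simp [LinearMap.quotKerEquivRange_apply_mk]
    calc g (π' c) = (g ∘ₗ (LinearMap.range π').subtype) ⟨π' c, hmem⟩ := rfl
      _ = (Submodule.liftQ (LinearMap.ker π') e' hle)
            ((LinearMap.quotKerEquivRange π').symm ⟨π' c, hmem⟩) := by rw [hg]; rfl
      _ = (Submodule.liftQ (LinearMap.ker π') e' hle) (Submodule.Quotient.mk c) := by
            rw [h1, LinearEquiv.symm_apply_apply]
      _ = e' c := Submodule.liftQ_apply _ _ _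
      _ = (c : Fin n → ZMod 2) j := rfl
  let y : Fin n → ZMod 2 := fun k => if k = j then 1 else
    if k ∈ S then 0 else g (Pi.single k 1)
  have hy : y ∈ dualCode C := by
    intro x hx
    have e1 : ∑ k, y k * x k
        = x j + ∑ k ∈ Finset.univ.erase j, (if k ∈ S then 0 else x k) * g (Pi.single k 1) := by
      rw [← Finset.add_sum_erase _ _ (Finset.mem_univ j)]
      congr 1
      · simp [y]
      · refine Finset.sum_congr rfl fun k hk => ?_
        have hne : k ≠ j := Finset.ne_of_mem_erase hk
        simp only [y, if_neg hne]
        split_ifs <;> ring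
    have e2 : g (p x)
        = ∑ k ∈ Finset.univ.erase j, (if k ∈ S then 0 else x k) * g (Pi.single k 1) := by
      rw [lin_sum g (p x), ← Finset.add_sum_erase _ _ (Finset.mem_univ j)]
      have hpj : p x j = 0 := by rw [hp]; simp [hj]
      rw [hpj, zero_mul, zero_add]
      refine Finset.sum_congr rfl fun k _ => ?_
      rw [hp]
    have e3 : g (p x) = x j := hgc ⟨x, hx⟩
    rw [e1, ← e2, e3, CharTwo.add_self_eq_zero]
  apply hS ⟨y, hy⟩
  have hfil : S.filter (fun k => Hstar C ⟨y, hy⟩ k = 1) = {j} := by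
    ext k
    rw [Finset.mem_filter, Finset.mem_singleton]; change k ∈ S ∧ y k = 1 ↔ k = j
    constructor
    · rintro ⟨hkS, hk1⟩
      by_contra hne
      simp only [y, if_neg hne, if_pos hkS] at hk1
      exact absurd hk1 (by decide)
    · rintro rfl
      exact ⟨hj, by simp [y]⟩
  rw [hfil, Finset.card_singleton]

/-- The support of a codeword is a stopping set of the complete parity-check matrix. -/
lemma supp_isStopping {n : ℕ} (C : Submodule (ZMod 2) (Fin n → ZMod 2))
    {c : Fin n → ZMod 2} (hc : c ∈ C) : IsStoppingSet (Hstar C) (supp c) := by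
  intro y hy1
  have h0 : ∑ k, (y : Fin n → ZMod 2) k * c k = 0 := y.2 c hc
  have h1 : ∑ k ∈ supp c, (y : Fin n → ZMod 2) k * c k = 0 := by
    rw [← h0]
    refine (Finset.sum_subset (Finset.subset_univ _) fun k _ hk => ?_)
    simp only [supp, Finset.mem_filter, Finset.mem_univ, true_and, not_not] at hk
    rw [hk, mul_zero]
  have h2 : ∑ k ∈ supp c, (y : Fin n → ZMod 2) k = 0 := by
    rw [← h1]
    refine Finset.sum_congr rfl fun k hk => ?_
    have hck : c k = 1 := zmod2_ne (by
      simpa only [supp, Finset.mem_filter, Finset.mem_univ, true_and] using hk)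
    rw [hck, mul_one]
  classical
  rw [← Finset.sum_filter_add_sum_filter_not (supp c)
    (fun k => (y : Fin n → ZMod 2) k = 1)] at h2
  have h3 : ∑ k ∈ (supp c).filter (fun k => ¬ (y : Fin n → ZMod 2) k = 1),
      (y : Fin n → ZMod 2) k = 0 := by
    refine Finset.sum_eq_zero fun k hk => ?_
    rcases zmod2_cases ((y : Fin n → ZMod 2) k) with h | h
    · exact h
    · exact absurd h (Finset.mem_filter.mp hk).2
  rw [h3, add_zero] at h2
  have h4 : ∑ k ∈ (supp c).filter (fun k => (y : Fin n → ZMod 2) k = 1),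
      (y : Fin n → ZMod 2) k
      = (((supp c).filter (fun k => (y : Fin n → ZMod 2) k = 1)).card : ZMod 2) := by
    rw [Finset.sum_congr rfl (fun k hk => (Finset.mem_filter.mp hk).2),
      Finset.sum_const, nsmul_eq_mul, mul_one]
  have hcard : (supp c).filter (fun k => Hstar C y k = 1)
      = (supp c).filter (fun k => (y : Fin n → ZMod 2) k = 1) := rfl
  rw [hcard] at hy1
  rw [h4, hy1] at h2
  exact absurd h2 (by decide)

/-- For the complete parity-check matrix H* of a binary [n,k,d] code, the number of
stopping sets of size i equals the number of codewords of weight i for all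
0 ≤ i ≤ min(⌈3d/2⌉ - 1, n). -/
theorem stmt_16 {n k d : ℕ} (C : Submodule (ZMod 2) (Fin n → ZMod 2))
    (hk : Module.finrank (ZMod 2) C = k)
    (hd : ∀ c ∈ C, c ≠ 0 → d ≤ wt c)
    (hex : ∃ c ∈ C, c ≠ 0 ∧ wt c = d) :
    ∀ i : ℕ, i ≤ min ((3 * d + 1) / 2 - 1) n →
      Set.ncard {S : Finset (Fin n) | S.card = i ∧ IsStoppingSet (Hstar C) S}
        = Set.ncard {c : Fin n → ZMod 2 | c ∈ C ∧ wt c = i} :=  by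
  intro i hi
  have hi1 : i ≤ (3 * d + 1) / 2 - 1 := le_of_le_of_eq (le_trans hi (min_le_left _ _)) rfl
  have hset : {S : Finset (Fin n) | S.card = i ∧ IsStoppingSet (Hstar C) S}
      = supp '' {c : Fin n → ZMod 2 | c ∈ C ∧ wt c = i} := by
    ext S
    simp only [Set.mem_setOf_eq, Set.mem_image]
    constructor
    · rintro ⟨hcard, hstop⟩
      rcases Finset.eq_empty_or_nonempty S with rfl | ⟨j, hj⟩
      · have hi0 : i = 0 := by simpa using hcard.symm
        refine ⟨0, ⟨C.zero_mem, ?_⟩, ?_⟩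
        · simp [wt, supp, hi0]
        · simp [supp]
      · obtain ⟨c, hc, hsub, hcj⟩ := stopping_mem_support C hstop hj
        have hc0 : c ≠ 0 := by
          intro h
          rw [h] at hcj
          exact absurd hcj (by simp)
        have hSsub : S ⊆ supp c := by
          intro j' hj'
          by_contra hj's
          obtain ⟨c', hc', hsub', hcj'⟩ := stopping_mem_support C hstop hj'
          have hc'0 : c' ≠ 0 := by
            intro h
            rw [h] at hcj'
            exact absurd hcj' (by simp)
          have hcc' : c ≠ c' := by
            intro h
            apply hj's
            simp only [supp, Finset.mem_filter, Finset.mem_univ, true_and]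
            rw [h, hcj']
            exact one_ne_zero
          have hsumC : c + c' ∈ C := C.add_mem hc hc'
          have hne : c + c' ≠ 0 := by
            intro h
            apply hcc'
            funext k
            have := congrFun h k
            simp only [Pi.add_apply, Pi.zero_apply] at this
            rcases zmod2_cases (c k) with h1 | h1 <;> rcases zmod2_cases (c' k) with h2 | h2 <;>
              simp_all
          have hd1 : d ≤ wt c := hd c hc hc0
          have hd2 : d ≤ wt c' := hd c' hc' hc'0
          have hd3 : d ≤ wt (c + c') := hd _ hsumC hne
          have hsuppsum : supp (c + c') = (supp c ∪ supp c') \ (supp c ∩ supp c') := by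
            ext k
            simp only [supp, Finset.mem_sdiff, Finset.mem_union, Finset.mem_inter,
              Finset.mem_filter, Finset.mem_univ, true_and, Pi.add_apply]
            rcases zmod2_cases (c k) with h1 | h1 <;> rcases zmod2_cases (c' k) with h2 | h2 <;>
              simp [h1, h2] <;> decide
          have hkey1 : wt c + wt c' = (supp c ∪ supp c').card + (supp c ∩ supp c').card :=
            (Finset.card_union_add_card_inter _ _).symm
          have hkey2 : wt (c + c') + (supp c ∩ supp c').card = (supp c ∪ supp c').card := by
            rw [wt, hsuppsum]
            exact Finset.card_sdiff_add_card_eq_card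
              ((Finset.inter_subset_left).trans Finset.subset_union_left)
          have hu : supp c ∪ supp c' ⊆ S := Finset.union_subset hsub hsub'
          have huc : (supp c ∪ supp c').card ≤ S.card := Finset.card_le_card hu
          have hpos : 1 ≤ S.card := Finset.card_pos.mpr ⟨j, hj⟩
          omega
        have hse : supp c = S := Finset.Subset.antisymm hsub hSsub
        exact ⟨c, ⟨hc, by rw [wt, hse, hcard]⟩, hse⟩
    · rintro ⟨c, ⟨hc, hwt⟩, rfl⟩
      exact ⟨hwt, supp_isStopping C hc⟩
  rw [hset]
  exact Set.ncard_image_of_injOn fun a _ b _ h => supp_inj h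
end
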